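/- Invariant region and finite-time reachability: under V̇(z) ≤ −λ_min(Q)|z|(|z| − Θ μΔ) with V(z) = z^T P z, the sublevel sets R₁ = {z : V(z) ≤ λ_min(P)M²μ²} and R₂ = {z : V(z) ≤ λ_max(P)Θ²Δ²(1+ε)²μ²} are forward invariant, and on R₁ \ R₂ one has V̇ ≤ −(λ_min(Q)/λ_max(P))·(ε/(1+ε))·V, so any trajectory starting in R₁ enters R₂ within time T = (λ_max(P)(1+ε)/(λ_min(Q)ε)) ln( λ_min(P)M² / (λ_max(P)Θ²Δ²(1+ε)²) ). -/

import Mathlib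

open Matrix

/-- Invariant region and finite-time reachability. Under
`V̇(z) ≤ −λ_min(Q)|z|(|z| − Θ μΔ)` with `V(z) = zᵀPz` (where
`lmin |v|² ≤ vᵀPv ≤ lmax |v|²` with `lmin, lmax` playing the role of `λ_min(P), λ_max(P)`
and `lq` that of `λ_min(Q)`, and `√(lmin/lmax) M > Θ Δ (1+ε)` so that `R₂ ⊂ R₁`), the
sublevel sets `R₁ = {V ≤ lmin M² μ²}` and `R₂ = {V ≤ lmax Θ² Δ² (1+ε)² μ²}` are forward
invariant; on `R₁ \ R₂` one has `V̇ ≤ −(lq/lmax)(ε/(1+ε)) V`; and any trajectory starting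
in `R₁` enters `R₂` within time
`T = (lmax(1+ε)/(lq ε)) ln(lmin M² / (lmax Θ² Δ² (1+ε)²))`. -/
lemma sublevel_invariant (V : ℝ → ℝ) (c : ℝ)
    (hVdiff : ∀ t, DifferentiableAt ℝ V t)
    (hbd : ∀ t, V t = c → deriv V t < 0) :
    ∀ t₀ t₁, t₀ ≤ t₁ → V t₀ ≤ c → V t₁ ≤ c := by
  intro t₀ t₁ h01 h0
  by_contra h1
  push_neg at h1
  have hVcont : Continuous V := continuous_iff_continuousAt.2 fun t => (hVdiff t).continuousAt
  set S : Set ℝ := Set.Icc t₀ t₁ ∩ V ⁻¹' Set.Iic c with hS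
  have hS_closed : IsClosed S := isClosed_Icc.inter (isClosed_Iic.preimage hVcont)
  have hS_ne : S.Nonempty := ⟨t₀, ⟨le_rfl, h01⟩, h0⟩
  have hS_bdd : BddAbove S := ⟨t₁, fun x hx => hx.1.2⟩
  set s := sSup S with hs
  have hs_mem : s ∈ S := hS_closed.csSup_mem hS_ne hS_bdd
  have hsV : V s ≤ c := hs_mem.2
  have hs1 : s ≤ t₁ := hs_mem.1.2
  have hst : s < t₁ := lt_of_le_of_ne hs1 (fun h => absurd hsV (by rw [h]; exact not_le.2 h1))
  have hgt : ∀ t, s < t → t ≤ t₁ → c < V t := by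
    intro t hts htt1
    by_contra hVt
    push_neg at hVt
    have : t ∈ S := ⟨⟨hs_mem.1.1.trans hts.le, htt1⟩, hVt⟩
    exact absurd (le_csSup hS_bdd this) (not_le.2 hts)
  have hVs : V s = c := by
    by_contra hne
    have hlt : V s < c := lt_of_le_of_ne hsV hne
    have hopen : {t | V t < c} ∈ nhds s :=
      (isOpen_lt hVcont continuous_const).mem_nhds hlt
    have h2 : Set.Ioc s t₁ ∈ nhdsWithin s (Set.Ioi s) := Ioc_mem_nhdsGT hst
    have h3 : {t | V t < c} ∈ nhdsWithin s (Set.Ioi s) := nhdsWithin_le_nhds hopen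
    obtain ⟨t, ht1, ht2⟩ := Filter.nonempty_of_mem (Filter.inter_mem h3 h2)
    exact absurd ht1 (not_lt.2 (hgt t ht2.1 ht2.2).le)
  have hderiv : deriv V s < 0 := hbd s hVs
  have hslope : Filter.Tendsto (slope V s) (nhdsWithin s {s}ᶜ) (nhds (deriv V s)) :=
    hasDerivAt_iff_tendsto_slope.mp (hVdiff s).hasDerivAt
  have hslope' : Filter.Tendsto (slope V s) (nhdsWithin s (Set.Ioi s)) (nhds (deriv V s)) :=
    hslope.mono_left (nhdsWithin_mono s fun t ht => ne_of_gt ht)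
  have hev : ∀ᶠ t in nhdsWithin s (Set.Ioi s), slope V s t < 0 :=
    hslope'.eventually_lt_const hderiv
  have h2 : Set.Ioc s t₁ ∈ nhdsWithin s (Set.Ioi s) := Ioc_mem_nhdsGT hst
  obtain ⟨t, ht1, ht2⟩ := (hev.and h2).exists
  have hts : s < t := ht2.1
  have : V t < V s := by
    rw [slope_def_field] at ht1
    have hpos : 0 < t - s := sub_pos.2 hts
    have h := mul_neg_of_neg_of_pos ht1 hpos
    rw [div_mul_cancel₀ _ (ne_of_gt hpos)] at h
    linarith
  rw [hVs] at this
  exact absurd this (not_lt.2 (hgt t hts ht2.2).le)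

set_option maxHeartbeats 800000 in
theorem invariant_regions_and_finite_time_reach
    (d : ℕ) (P : Matrix (Fin d) (Fin d) ℝ) (hP : P.PosDef)
    (lmin lmax lq Θc Δ μ ε M : ℝ)
    (hlmin : 0 < lmin) (hlmax : 0 < lmax) (hlq : 0 < lq) (hΘc : 0 < Θc)
    (hΔ : 0 < Δ) (hμ : 0 < μ) (hε : 0 < ε) (hM : 0 < M)
    (hlow : ∀ v : Fin d → ℝ, lmin * (v ⬝ᵥ v) ≤ v ⬝ᵥ P.mulVec v)
    (hhigh : ∀ v : Fin d → ℝ, v ⬝ᵥ P.mulVec v ≤ lmax * (v ⬝ᵥ v))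
    (hgap : Θc * Δ * (1 + ε) < Real.sqrt (lmin / lmax) * M)
    (z : ℝ → Fin d → ℝ) (V : ℝ → ℝ)
    (hV : ∀ t, V t = z t ⬝ᵥ P.mulVec (z t))
    (hVdiff : ∀ t, DifferentiableAt ℝ V t)
    (hdecay : ∀ t, deriv V t ≤
      -lq * Real.sqrt (z t ⬝ᵥ z t) * (Real.sqrt (z t ⬝ᵥ z t) - Θc * μ * Δ)) :
    (∀ t₀ t₁, t₀ ≤ t₁ → V t₀ ≤ lmin * M ^ 2 * μ ^ 2 → V t₁ ≤ lmin * M ^ 2 * μ ^ 2) ∧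
    (∀ t₀ t₁, t₀ ≤ t₁ → V t₀ ≤ lmax * Θc ^ 2 * Δ ^ 2 * (1 + ε) ^ 2 * μ ^ 2 →
      V t₁ ≤ lmax * Θc ^ 2 * Δ ^ 2 * (1 + ε) ^ 2 * μ ^ 2) ∧
    (∀ t, V t ≤ lmin * M ^ 2 * μ ^ 2 →
      lmax * Θc ^ 2 * Δ ^ 2 * (1 + ε) ^ 2 * μ ^ 2 ≤ V t →
      deriv V t ≤ -(lq / lmax) * (ε / (1 + ε)) * V t) ∧
    (∀ t₀, V t₀ ≤ lmin * M ^ 2 * μ ^ 2 →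
      ∃ t₁ ∈ Set.Icc t₀ (t₀ +
        lmax * (1 + ε) / (lq * ε) *
          Real.log (lmin * M ^ 2 / (lmax * Θc ^ 2 * Δ ^ 2 * (1 + ε) ^ 2))),
        V t₁ ≤ lmax * Θc ^ 2 * Δ ^ 2 * (1 + ε) ^ 2 * μ ^ 2) := by
  have hε1 : (0:ℝ) < 1 + ε := by linarith
  set c₁ : ℝ := lmin * M ^ 2 * μ ^ 2 with hc₁
  set c₂ : ℝ := lmax * Θc ^ 2 * Δ ^ 2 * (1 + ε) ^ 2 * μ ^ 2 with hc₂
  have hzz : ∀ t, (0:ℝ) ≤ z t ⬝ᵥ z t := fun t => by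
    simpa using dotProduct_self_star_nonneg (z t)
  have hr2 : ∀ t, (Real.sqrt (z t ⬝ᵥ z t)) ^ 2 = z t ⬝ᵥ z t := fun t =>
    Real.sq_sqrt (hzz t)
  have hr0 : ∀ t, (0:ℝ) ≤ Real.sqrt (z t ⬝ᵥ z t) := fun t => Real.sqrt_nonneg _
  have hVhigh : ∀ t, V t ≤ lmax * (Real.sqrt (z t ⬝ᵥ z t)) ^ 2 := fun t => by
    rw [hr2 t, hV t]; exact hhigh (z t)
  -- boundary condition
  have hbdry : ∀ t b, Θc * μ * Δ < b → lmax * b ^ 2 ≤ V t → deriv V t < 0 := by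
    intro t b hb hVb
    set r := Real.sqrt (z t ⬝ᵥ z t) with hr
    have hb0 : 0 ≤ b := le_of_lt (lt_of_le_of_lt (by positivity) hb)
    have hrb : b ≤ r := by
      have h1 : lmax * b ^ 2 ≤ lmax * r ^ 2 := le_trans hVb (hVhigh t)
      have h2 : b ^ 2 ≤ r ^ 2 := le_of_mul_le_mul_left h1 hlmax
      nlinarith [hr0 t]
    have h3 : Θc * μ * Δ < r := lt_of_lt_of_le hb hrb
    have h4 : (0:ℝ) < r := lt_of_le_of_lt (by positivity) h3
    calc deriv V t ≤ -lq * r * (r - Θc * μ * Δ) := hdecay t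
      _ < 0 := by
        have := mul_pos (mul_pos hlq h4) (sub_pos.2 h3)
        nlinarith
  have hgapμ : Θc * Δ * (1 + ε) * μ < Real.sqrt (lmin / lmax) * M * μ :=
    mul_lt_mul_of_pos_right hgap hμ
  have hsq : (Real.sqrt (lmin / lmax)) ^ 2 = lmin / lmax :=
    Real.sq_sqrt (le_of_lt (div_pos hlmin hlmax))
  -- invariance of R₁
  have key1 : ∀ t₀ t₁, t₀ ≤ t₁ → V t₀ ≤ c₁ → V t₁ ≤ c₁ := by
    refine sublevel_invariant V c₁ hVdiff ?_
    intro t ht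
    refine hbdry t (Real.sqrt (lmin / lmax) * M * μ) ?_ ?_
    · refine lt_trans ?_ hgapμ
      nlinarith [mul_pos (mul_pos (mul_pos hΘc hΔ) hμ) hε]
    · have : lmax * (Real.sqrt (lmin / lmax) * M * μ) ^ 2 = c₁ := by
        have : (Real.sqrt (lmin / lmax) * M * μ) ^ 2
            = (lmin / lmax) * M ^ 2 * μ ^ 2 := by rw [mul_pow, mul_pow, hsq]
        rw [this, hc₁]; field_simp
      rw [this, ht]
  -- invariance of R₂
  have key2 : ∀ t₀ t₁, t₀ ≤ t₁ → V t₀ ≤ c₂ → V t₁ ≤ c₂ := by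
    refine sublevel_invariant V c₂ hVdiff ?_
    intro t ht
    refine hbdry t (Θc * Δ * (1 + ε) * μ)
      (by nlinarith [mul_pos (mul_pos (mul_pos hΘc hΔ) hμ) hε]) ?_
    have : lmax * (Θc * Δ * (1 + ε) * μ) ^ 2 = c₂ := by rw [hc₂]; ring
    rw [this, ht]
  -- decay on R₁ \ R₂
  have key3 : ∀ t, V t ≤ c₁ → c₂ ≤ V t →
      deriv V t ≤ -(lq / lmax) * (ε / (1 + ε)) * V t := by
    intro t h1 h2
    set r := Real.sqrt (z t ⬝ᵥ z t) with hr
    have hrge : Θc * Δ * (1 + ε) * μ ≤ r := by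
      have hb0 : (0:ℝ) ≤ Θc * Δ * (1 + ε) * μ := by positivity
      have hA : lmax * (Θc * Δ * (1 + ε) * μ) ^ 2 ≤ lmax * r ^ 2 := by
        have : lmax * (Θc * Δ * (1 + ε) * μ) ^ 2 = c₂ := by rw [hc₂]; ring
        rw [this]; exact le_trans h2 (hVhigh t)
      have := le_of_mul_le_mul_left hA hlmax
      nlinarith [hr0 t]
    calc deriv V t ≤ -lq * r * (r - Θc * μ * Δ) := hdecay t
      _ ≤ -(lq / lmax) * (ε / (1 + ε)) * V t := by
        have hmain : lq / lmax * (ε / (1 + ε)) * V t ≤ lq * r * (r - Θc * μ * Δ) := by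
          have hstep : lq / lmax * (ε / (1 + ε)) * V t
              ≤ lq / lmax * (ε / (1 + ε)) * (lmax * r ^ 2) :=
            mul_le_mul_of_nonneg_left (hVhigh t) (by positivity)
          refine le_trans hstep ?_
          have heq : lq / lmax * (ε / (1 + ε)) * (lmax * r ^ 2)
              = lq * ε / (1 + ε) * r ^ 2 := by field_simp
          rw [heq, div_mul_eq_mul_div, div_le_iff₀ hε1]
          have hrge2 : Θc * μ * Δ * (1 + ε) ≤ r := by linarith [hrge]
          nlinarith [mul_nonneg (mul_nonneg hlq.le (hr0 t)) (sub_nonneg.2 hrge2)]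
        nlinarith [hmain]
  refine ⟨key1, key2, key3, ?_⟩
  -- finite time reachability
  intro t₀ h0
  set L : ℝ := Real.log (lmin * M ^ 2 / (lmax * Θc ^ 2 * Δ ^ 2 * (1 + ε) ^ 2)) with hL
  set T : ℝ := lmax * (1 + ε) / (lq * ε) * L with hT
  set α : ℝ := lq / lmax * (ε / (1 + ε)) with hα
  have hαpos : 0 < α := by positivity
  have hratio : (1:ℝ) < lmin * M ^ 2 / (lmax * Θc ^ 2 * Δ ^ 2 * (1 + ε) ^ 2) := by
    rw [lt_div_iff₀ (by positivity)]
    have hs0 : 0 ≤ Real.sqrt (lmin / lmax) := Real.sqrt_nonneg _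
    have hlmin_eq : lmin = lmax * Real.sqrt (lmin / lmax) ^ 2 := by
      rw [hsq]; field_simp
    rw [hlmin_eq]
    have hsum : 0 < Θc * Δ * (1 + ε) + Real.sqrt (lmin / lmax) * M := by
      have := mul_nonneg hs0 hM.le
      nlinarith [mul_pos (mul_pos hΘc hΔ) hε1]
    nlinarith [mul_pos (sub_pos.2 hgap) hsum, hlmax]
  have hLpos : 0 < L := Real.log_pos hratio
  have hTpos : 0 < T := by
    rw [hT]; exact mul_pos (by positivity) hLpos
  have hexp : Real.exp (α * T) = lmin * M ^ 2 / (lmax * Θc ^ 2 * Δ ^ 2 * (1 + ε) ^ 2) := by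
    have hαT : α * T = L := by rw [hα, hT]; field_simp
    rw [hαT, hL, Real.exp_log (by positivity)]
  by_cases hcase : ∃ t ∈ Set.Icc t₀ (t₀ + T), V t ≤ c₂
  · obtain ⟨t, ht, hVt⟩ := hcase
    exact ⟨t, ht, hVt⟩
  · push_neg at hcase
    exfalso
    -- on the whole interval V > c₂; Grönwall gives V (t₀+T) ≤ c₂, contradiction
    set W : ℝ → ℝ := fun t => V t * Real.exp (α * t) with hW
    have hWderiv : ∀ t, HasDerivAt W
        (deriv V t * Real.exp (α * t) + V t * (α * Real.exp (α * t))) t := by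
      intro t
      have h1 : HasDerivAt V (deriv V t) t := (hVdiff t).hasDerivAt
      have h2 : HasDerivAt (fun t => Real.exp (α * t)) (α * Real.exp (α * t)) t := by
        have := ((hasDerivAt_id t).const_mul α).exp
        simpa [mul_comm] using this
      exact h1.mul h2
    have hanti : AntitoneOn W (Set.Icc t₀ (t₀ + T)) := by
      refine antitoneOn_of_deriv_nonpos (convex_Icc _ _) ?_ ?_ ?_
      · exact Continuous.continuousOn (by
          exact (continuous_iff_continuousAt.2 fun t => (hVdiff t).continuousAt).mul
            (Real.continuous_exp.comp (continuous_const.mul continuous_id)))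
      · intro t _
        exact ((hWderiv t).differentiableAt).differentiableWithinAt
      · intro t ht
        rw [interior_Icc] at ht
        rw [(hWderiv t).deriv]
        have hmem : t ∈ Set.Icc t₀ (t₀ + T) := ⟨ht.1.le, ht.2.le⟩
        have hV1 : V t ≤ c₁ := key1 t₀ t ht.1.le h0
        have hV2 : c₂ ≤ V t := (hcase t hmem).le
        have hd := key3 t hV1 hV2
        have hepos : 0 < Real.exp (α * t) := Real.exp_pos _
        have hsum : deriv V t + α * V t ≤ 0 := by
          rw [hα]; nlinarith [hd]
        nlinarith [hsum, hepos, mul_nonpos_of_nonpos_of_nonneg hsum hepos.le]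
    have hWle : W (t₀ + T) ≤ W t₀ :=
      hanti (Set.left_mem_Icc.2 (by linarith)) (Set.right_mem_Icc.2 (by linarith)) (by linarith)
    have hc2exp : c₂ * Real.exp (α * T) = c₁ := by
      rw [hexp, hc₂, hc₁]; field_simp
    have hfinal : V (t₀ + T) ≤ c₂ := by
      have hE : (0:ℝ) < Real.exp (α * (t₀ + T)) := Real.exp_pos _
      rw [← mul_le_mul_iff_left₀ hE]
      calc V (t₀ + T) * Real.exp (α * (t₀ + T)) = W (t₀ + T) := rfl
        _ ≤ W t₀ := hWle
        _ = V t₀ * Real.exp (α * t₀) := rfl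
        _ ≤ c₁ * Real.exp (α * t₀) := by
            exact mul_le_mul_of_nonneg_right h0 (Real.exp_pos _).le
        _ = c₂ * Real.exp (α * (t₀ + T)) := by
            rw [← hc2exp, mul_add, Real.exp_add]; ring
    exact absurd hfinal (not_le.2 (hcase (t₀ + T) (Set.right_mem_Icc.2 (by linarith))))
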